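/- Fix λ > 0 and K ≥ 0. There exists T > 0 such that for all t ≥ T, setting s = t − √t, for every x with |x| ≤ λt − t^{2/3} and every y with |y| ≤ K, one has (y + λt − x)²/(2t) − (y + λs − x)²/(2s) ≥ (λ/4) · t^{1/6}. -/

import Mathlib

open Real

lemma poly_key (lam K u A : ℝ) (hlam : 0 < lam) (hK : 0 ≤ K)
    (hu1 : 1 ≤ u) (hu2 : 4 * lam ≤ u) (hu3 : 4 ≤ lam * u) (hu4 : 4 * K ≤ u)
    (hA1 : u ^ 4 - K ≤ A) (hA2 : A ≤ 2 * lam * u ^ 6 - u ^ 4 + K) :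
    lam / 4 * u * (2 * u ^ 6 * (u ^ 6 - u ^ 3))
      ≤ u ^ 3 * (A * (2 * lam * u ^ 6 - A)) - lam ^ 2 * u ^ 12 := by
  have hu0 : (0:ℝ) ≤ u := le_trans zero_le_one hu1
  have p1 : 0 ≤ A - (u ^ 4 - K) := by linarith
  have p2 : 0 ≤ (2 * lam * u ^ 6 - u ^ 4 + K) - A := by linarith
  have step1 : u ^ 3 * ((u ^ 4 - K) * (2 * lam * u ^ 6 - u ^ 4 + K))
      ≤ u ^ 3 * (A * (2 * lam * u ^ 6 - A)) := by
    nlinarith [mul_nonneg (mul_nonneg (pow_nonneg hu0 3) p1) p2]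
  have ha : lam ^ 2 * u ^ 12 ≤ lam / 4 * u ^ 13 := by
    nlinarith [mul_nonneg hlam.le (mul_nonneg (sub_nonneg.2 hu2) (pow_nonneg hu0 12))]
  have hb : u ^ 11 ≤ lam / 4 * u ^ 13 := by
    nlinarith [mul_nonneg (sub_nonneg.2 hu3) (pow_nonneg hu0 12),
      mul_nonneg (sub_nonneg.2 hu1) (pow_nonneg hu0 11)]
  have hc : 2 * lam * K * u ^ 9 ≤ lam / 2 * u ^ 10 := by
    nlinarith [mul_nonneg hlam.le (mul_nonneg (sub_nonneg.2 hu4) (pow_nonneg hu0 9))]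
  have hd : K ^ 2 * u ^ 3 ≤ lam * u ^ 13 := by
    have h1 : K ^ 2 * u ^ 3 ≤ u ^ 5 / 16 := by
      nlinarith [mul_nonneg (mul_nonneg (sub_nonneg.2 hu4) (by linarith : (0:ℝ) ≤ u + 4 * K))
        (pow_nonneg hu0 3)]
    have h2 : u ^ 5 / 16 ≤ lam / 64 * u ^ 6 := by
      nlinarith [mul_nonneg (sub_nonneg.2 hu3) (pow_nonneg hu0 5)]
    have h3 : lam / 64 * u ^ 6 ≤ lam * u ^ 13 := by
      nlinarith [mul_nonneg hlam.le (mul_nonneg (sub_nonneg.2 (one_le_pow₀ hu1 : (1:ℝ) ≤ u ^ 7)) (pow_nonneg hu0 6))]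
    linarith
  have he : 0 ≤ 2 * K * u ^ 7 := by positivity
  nlinarith [step1, ha, hb, hc, hd, he]

set_option maxHeartbeats 1000000 in
/-- Exponent comparison for `s = t - √t`: for `t` large, uniformly over `|x| ≤ λt - t^{2/3}`
and `|y| ≤ K`, `(y + λt - x)²/(2t) - (y + λs - x)²/(2s) ≥ (λ/4) t^{1/6}`. -/
theorem exponent_comparison_center (lam K : ℝ) (hlam : 0 < lam) (hK : 0 ≤ K) :
    ∃ T > 0, ∀ t ≥ T, ∀ x : ℝ, |x| ≤ lam * t - t ^ ((2 : ℝ) / 3) → ∀ y : ℝ, |y| ≤ K →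
      (y + lam * t - x) ^ 2 / (2 * t)
          - (y + lam * (t - Real.sqrt t) - x) ^ 2 / (2 * (t - Real.sqrt t))
        ≥ lam / 4 * t ^ ((1 : ℝ) / 6) := by
  obtain ⟨b, hb_def⟩ : ∃ b : ℝ, b = 4 * lam + 4 / lam + 4 * K + 2 := ⟨_, rfl⟩
  have hb1 : (1:ℝ) < b := by
    have : 0 < 4 / lam := by positivity
    rw [hb_def]; nlinarith
  have hb0 : (0:ℝ) < b := lt_trans one_pos hb1
  refine ⟨b ^ 6, by positivity, ?_⟩
  intro t ht x hx y hy
  have ht0 : 0 < t := lt_of_lt_of_le (by positivity) ht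
  set u : ℝ := t ^ ((1:ℝ)/6) with hu_def
  have hu0 : 0 < u := Real.rpow_pos_of_pos ht0 _
  have hub : b ≤ u := by
    have h1 : (b ^ 6 : ℝ) ^ ((1:ℝ)/6) ≤ u :=
      Real.rpow_le_rpow (by positivity) ht (by norm_num)
    have h2 : (b ^ 6 : ℝ) ^ ((1:ℝ)/6) = b := by
      rw [← Real.rpow_natCast b 6, ← Real.rpow_mul hb0.le]
      norm_num
    linarith [h2 ▸ h1]
  have h6 : u ^ 6 = t := by
    rw [hu_def, ← Real.rpow_natCast (t ^ ((1:ℝ)/6)) 6, ← Real.rpow_mul ht0.le]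
    norm_num
  have h4 : u ^ 4 = t ^ ((2:ℝ)/3) := by
    rw [hu_def, ← Real.rpow_natCast (t ^ ((1:ℝ)/6)) 4, ← Real.rpow_mul ht0.le]
    norm_num
  have h3 : u ^ 3 = Real.sqrt t := by
    rw [hu_def, ← Real.rpow_natCast (t ^ ((1:ℝ)/6)) 3, ← Real.rpow_mul ht0.le,
      Real.sqrt_eq_rpow]
    norm_num
  rw [← h4, ← h6] at hx
  rw [← h3, ← h6]
  -- derive bounds on u
  have hu1 : (1:ℝ) ≤ u := le_of_lt (lt_of_lt_of_le hb1 hub)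
  have hu2 : 4 * lam ≤ u := by
    have : 0 < 4 / lam := by positivity
    rw [hb_def] at hub; nlinarith
  have hu4K : 4 * K ≤ u := by
    have : 0 < 4 / lam := by positivity
    rw [hb_def] at hub; nlinarith
  have hu3 : 4 ≤ lam * u := by
    have h : 4 / lam ≤ u := by
      have : 0 < 4 / lam := by positivity
      rw [hb_def] at hub; nlinarith
    calc (4:ℝ) = lam * (4 / lam) := by field_simp
    _ ≤ lam * u := by nlinarith
  -- bounds on A
  set A : ℝ := y + lam * u ^ 6 - x with hA_def
  have hxl := abs_le.1 hx
  have hyl := abs_le.1 hy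
  have hA1 : u ^ 4 - K ≤ A := by rw [hA_def]; linarith [hxl.2, hyl.1]
  have hA2 : A ≤ 2 * lam * u ^ 6 - u ^ 4 + K := by rw [hA_def]; linarith [hxl.1, hyl.2]
  have hs : 0 < u ^ 6 - u ^ 3 := by nlinarith [pow_pos hu0 3, pow_pos hu0 6]
  have ht' : (0:ℝ) < 2 * u ^ 6 := by positivity
  have hs' : (0:ℝ) < 2 * (u ^ 6 - u ^ 3) := by linarith
  have hrw : y + lam * (u ^ 6 - u ^ 3) - x = A - lam * u ^ 3 := by rw [hA_def]; ring
  rw [hrw]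
  have hident : A ^ 2 / (2 * u ^ 6) - (A - lam * u ^ 3) ^ 2 / (2 * (u ^ 6 - u ^ 3))
      = (u ^ 3 * (A * (2 * lam * u ^ 6 - A)) - lam ^ 2 * u ^ 12)
        / (2 * u ^ 6 * (u ^ 6 - u ^ 3)) := by
    rw [div_sub_div _ _ (ne_of_gt ht') (ne_of_gt hs'),
      div_eq_div_iff (mul_ne_zero (ne_of_gt ht') (ne_of_gt hs')) (mul_ne_zero (ne_of_gt ht') (ne_of_gt hs))]
    ring
  rw [hident, ge_iff_le, le_div_iff₀ (by positivity : (0:ℝ) < 2 * u ^ 6 * (u ^ 6 - u ^ 3))]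
  exact poly_key lam K u A hlam hK hu1 hu2 hu3 hu4K hA1 hA2
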